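/- Let n ≥ 1, 0 < α < n and r > 0. Then there exists a constant C depending only on n and α such that for every locally integrable f : ℝⁿ → ℝ and every x ∈ ℝⁿ, Mʳ(Mʳ_α f)(x) ≤ C · M^{2r}_α f(x). -/

import Mathlib

open MeasureTheory Metric ENNReal

/-- The cut-off fractional maximal function `Mʳ_α f (x) = sup_{0<ρ<r} ρ^α ⨍_{B_ρ(x)} f`;
`Mʳ := Mʳ₀` is the cut-off Hardy–Littlewood maximal function. -/
noncomputable def fracMaxLt {n : ℕ} (α r : ℝ)
    (f : EuclideanSpace ℝ (Fin n) → ℝ≥0∞) (x : EuclideanSpace ℝ (Fin n)) : ℝ≥0∞ :=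
  ⨆ (ρ : ℝ) (_ : 0 < ρ) (_ : ρ < r), ENNReal.ofReal (ρ ^ α) * ⨍⁻ y in ball x ρ, f y ∂volume

noncomputable def Vb (n : ℕ) : ℝ≥0∞ := volume (ball (0 : EuclideanSpace ℝ (Fin n)) 1)

lemma Vb_pos (n : ℕ) : 0 < Vb n := measure_ball_pos _ _ one_pos

lemma Vb_ne_top (n : ℕ) : Vb n ≠ ⊤ := measure_ball_lt_top.ne

lemma vol_ball {n : ℕ} (c : EuclideanSpace ℝ (Fin n)) {s : ℝ} (hs : 0 < s) :
    volume (ball c s) = ENNReal.ofReal (s ^ n) * Vb n := by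
  rw [Vb, Measure.addHaar_ball_of_pos _ c hs, finrank_euclideanSpace_fin]

lemma rpow_anti {a b : ℝ≥0∞} (hab : a ≤ b) {e : ℝ} (he : e ≤ 0) : b ^ e ≤ a ^ e := by
  rw [← neg_neg e, ENNReal.rpow_neg b, ENNReal.rpow_neg a]
  exact ENNReal.inv_le_inv.mpr (ENNReal.rpow_le_rpow hab (neg_nonneg.mpr he))

-- real arithmetic: dyadic term
lemma term_eq {α nr R : ℝ} (hn : 0 < nr) (hR : 0 < R) (k : ℕ) :
    (R / 2 ^ (k + 1)) ^ (α - nr) * (R / 2 ^ k) ^ nr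
      = R ^ α * 2 ^ (nr - α) * (2 ^ (-α)) ^ k := by
  have h2 : (0:ℝ) < 2 := by norm_num
  have hb : ∀ (m : ℕ) (e : ℝ), ((2:ℝ) ^ m) ^ e = 2 ^ ((m:ℝ) * e) := fun m e => by
    rw [← Real.rpow_natCast (2:ℝ) m, ← Real.rpow_mul h2.le]
  calc (R / 2 ^ (k + 1)) ^ (α - nr) * (R / 2 ^ k) ^ nr
      = (R ^ (α - nr) / ((2:ℝ) ^ (k + 1)) ^ (α - nr)) * (R ^ nr / ((2:ℝ) ^ k) ^ nr) := by
        rw [Real.div_rpow hR.le (by positivity), Real.div_rpow hR.le (by positivity)]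
    _ = (R ^ (α - nr) * R ^ nr) / (2 ^ ((↑(k+1):ℝ) * (α - nr)) * 2 ^ ((k:ℝ) * nr)) := by
        rw [hb, hb, div_mul_div_comm]
    _ = R ^ α / 2 ^ ((↑(k+1):ℝ) * (α - nr) + (k:ℝ) * nr) := by
        rw [← Real.rpow_add hR, ← Real.rpow_add h2, show α - nr + nr = α by ring]
    _ = R ^ α * 2 ^ (-((↑(k+1):ℝ) * (α - nr) + (k:ℝ) * nr)) := by
        rw [Real.rpow_neg h2.le, div_eq_mul_inv]
    _ = R ^ α * (2 ^ (nr - α) * 2 ^ ((-α) * (k:ℕ))) := by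
        rw [← Real.rpow_add h2, show (nr - α) + (-α) * ((k:ℕ):ℝ)
          = -((↑(k+1):ℝ) * (α - nr) + (k:ℝ) * nr) by push_cast; ring]
    _ = R ^ α * 2 ^ (nr - α) * (2 ^ (-α)) ^ k := by
        rw [Real.rpow_mul_natCast h2.le, mul_assoc]

lemma realInner {α : ℝ} (n : ℕ) {s : ℝ} (hs : 0 < s) :
    s ^ α * s ^ ((n:ℝ) - α) * (s ^ n)⁻¹ = 1 := by
  rw [← Real.rpow_add hs, show α + ((n:ℝ) - α) = (n:ℝ) by ring, Real.rpow_natCast,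
    mul_inv_cancel₀ (by positivity)]

lemma realB {α : ℝ} (hα0 : 0 ≤ α) (n : ℕ) {s ρ : ℝ} (hs : 0 < s) (hρ : 0 ≤ ρ) (hρs : ρ ≤ s) :
    s ^ α * (s + ρ) ^ n ≤ 2 ^ n * (s + ρ) ^ α * s ^ n := by
  have hsρ : 0 < s + ρ := by linarith
  have h1 : s ^ α ≤ (s + ρ) ^ α := Real.rpow_le_rpow hs.le (by linarith) hα0
  have h2 : (s + ρ) ^ n ≤ 2 ^ n * s ^ n := by
    calc (s + ρ) ^ n ≤ (2 * s) ^ n := pow_le_pow_left₀ hsρ.le (by linarith) n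
    _ = 2 ^ n * s ^ n := mul_pow 2 s n
  calc s ^ α * (s + ρ) ^ n ≤ (s + ρ) ^ α * (2 ^ n * s ^ n) :=
        mul_le_mul h1 h2 (by positivity) (by positivity)
  _ = 2 ^ n * (s + ρ) ^ α * s ^ n := by ring

lemma realA {α : ℝ} (n : ℕ) {ρ : ℝ} (hρ : 0 < ρ) :
    (3 * ρ) ^ α * ((2 * ρ) ^ n) ≤ 3 ^ α * 2 ^ ((n:ℝ) - α) * ((2 * ρ) ^ α * (ρ ^ n)) := by
  apply le_of_eq
  rw [Real.mul_rpow (by norm_num) hρ.le, Real.mul_rpow (by norm_num) hρ.le, mul_pow]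
  have h : (2:ℝ) ^ ((n:ℝ) - α) * 2 ^ α = 2 ^ n := by
    rw [← Real.rpow_add (by norm_num), show (n:ℝ) - α + α = (n:ℝ) by ring, Real.rpow_natCast]
  rw [← h]; ring

-- bridging lemma for coefficient inequalities
lemma bridge {a b c d : ℝ} (hb : 0 < b) (hd : 0 < d) (h : a * d ≤ c * b) :
    ENNReal.ofReal a * (ENNReal.ofReal b)⁻¹ ≤ ENNReal.ofReal c * (ENNReal.ofReal d)⁻¹ := by
  rw [← ENNReal.ofReal_inv_of_pos hb, ← ENNReal.ofReal_inv_of_pos hd,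
    ← ENNReal.ofReal_mul' (inv_nonneg.mpr hb.le), ← ENNReal.ofReal_mul' (inv_nonneg.mpr hd.le)]
  exact ENNReal.ofReal_le_ofReal (by rwa [← div_eq_mul_inv, ← div_eq_mul_inv,
    div_le_div_iff₀ hb hd])

lemma le_fracMaxLt {n : ℕ} (α r : ℝ) (g : EuclideanSpace ℝ (Fin n) → ℝ≥0∞)
    (x : EuclideanSpace ℝ (Fin n)) {ρ : ℝ} (h0 : 0 < ρ) (hr : ρ < r) :
    ENNReal.ofReal (ρ ^ α) * ⨍⁻ y in ball x ρ, g y ∂volume ≤ fracMaxLt α r g x := by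
  refine le_iSup_of_le ρ ?_
  rw [iSup_pos h0, iSup_pos hr]

lemma fracMaxLt_le {n : ℕ} {α r : ℝ} {g : EuclideanSpace ℝ (Fin n) → ℝ≥0∞}
    {x : EuclideanSpace ℝ (Fin n)} {c : ℝ≥0∞}
    (h : ∀ ρ : ℝ, 0 < ρ → ρ < r → ENNReal.ofReal (ρ ^ α) * ⨍⁻ y in ball x ρ, g y ∂volume ≤ c) :
    fracMaxLt α r g x ≤ c := by
  refine iSup_le fun ρ => iSup_le fun h0 => iSup_le fun hr => h ρ h0 hr

lemma kernelBound {n : ℕ} (hn : 1 ≤ n) {α : ℝ} (hα0 : 0 < α) (hαn : α < n)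
    (c : EuclideanSpace ℝ (Fin n)) {R : ℝ} (hR : 0 < R) :
    ∫⁻ z in ball c R, edist z c ^ (α - (n:ℝ)) ∂volume ≤
      ENNReal.ofReal (2 ^ ((n:ℝ) - α)) * Vb n * (1 - ENNReal.ofReal (2 ^ (-α)))⁻¹ *
        ENNReal.ofReal (R ^ α) := by
  haveI : Nontrivial (EuclideanSpace ℝ (Fin n)) :=
    Module.nontrivial_of_finrank_pos (R := ℝ)
      (by rw [finrank_euclideanSpace_fin]; omega)
  have hea : α - (n:ℝ) ≤ 0 := by
    have : (α:ℝ) < n := hαn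
    linarith
  -- remove the center point
  have hae : (ball c R : Set (EuclideanSpace ℝ (Fin n))) =ᵐ[volume] (ball c R \ ({c} : Set (EuclideanSpace ℝ (Fin n)))) := by
    refine (MeasureTheory.diff_ae_eq_self.mpr ?_).symm
    exact measure_mono_null Set.inter_subset_right (measure_singleton c)
  rw [setLIntegral_congr hae]
  -- cover by dyadic annuli
  have hsub : (ball c R \ {c} : Set (EuclideanSpace ℝ (Fin n))) ⊆
      ⋃ k : ℕ, (ball c (R / 2 ^ k) \ ball c (R / 2 ^ (k + 1))) := by
    intro z hz
    have hd0 : 0 < dist z c := dist_pos.mpr (by simpa using hz.2)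
    have hdR : dist z c < R := mem_ball.mp hz.1
    have hex : ∃ k : ℕ, R / 2 ^ (k + 1) ≤ dist z c := by
      obtain ⟨k, hk⟩ := pow_unbounded_of_one_lt (R / dist z c) (by norm_num : (1:ℝ) < 2)
      refine ⟨k, ?_⟩
      rw [div_le_iff₀ (by positivity)]
      rw [div_lt_iff₀ hd0] at hk
      have h2k : (2:ℝ) ^ k ≤ 2 ^ (k+1) := pow_le_pow_right₀ (by norm_num) (by omega)
      nlinarith
    classical
    let k := Nat.find hex
    refine Set.mem_iUnion.mpr ⟨k, ?_, ?_⟩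
    · -- dist z c < R / 2 ^ k
      rcases Nat.eq_zero_or_pos k with hk0 | hk0
      · simpa [hk0] using hdR
      · have := Nat.find_min hex (m := k - 1) (by omega)
        push_neg at this
        refine mem_ball.mpr ?_
        have hkk : k - 1 + 1 = k := by omega
        rw [hkk] at this
        exact this
    · -- ¬ dist z c < R / 2 ^ (k+1)
      intro hmem
      have := Nat.find_spec hex
      have h2 : dist z c < R / 2 ^ (k + 1) := mem_ball.mp hmem
      exact absurd this (not_le.mpr h2)
  calc ∫⁻ z in ball c R \ {c}, edist z c ^ (α - (n:ℝ)) ∂volume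
      ≤ ∫⁻ z in ⋃ k : ℕ, (ball c (R / 2 ^ k) \ ball c (R / 2 ^ (k + 1))),
          edist z c ^ (α - (n:ℝ)) ∂volume := lintegral_mono_set hsub
    _ ≤ ∑' k : ℕ, ∫⁻ z in (ball c (R / 2 ^ k) \ ball c (R / 2 ^ (k + 1))),
          edist z c ^ (α - (n:ℝ)) ∂volume := lintegral_iUnion_le _ _
    _ ≤ ∑' k : ℕ, ENNReal.ofReal (R ^ α * 2 ^ ((n:ℝ) - α) * (2 ^ (-α)) ^ k) * Vb n := by
        refine ENNReal.tsum_le_tsum fun k => ?_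
        have hrk : (0:ℝ) < R / 2 ^ (k+1) := by positivity
        have hrk' : (0:ℝ) < R / 2 ^ k := by positivity
        have step1 : ∫⁻ z in (ball c (R / 2 ^ k) \ ball c (R / 2 ^ (k + 1))),
            edist z c ^ (α - (n:ℝ)) ∂volume ≤
            ENNReal.ofReal (R / 2 ^ (k+1)) ^ (α - (n:ℝ)) *
              volume (ball c (R / 2 ^ k)) := by
          have hpt : ∀ z ∈ (ball c (R / 2 ^ k) \ ball c (R / 2 ^ (k + 1))),
              edist z c ^ (α - (n:ℝ)) ≤ ENNReal.ofReal (R / 2 ^ (k+1)) ^ (α - (n:ℝ)) := by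
            intro z hz
            apply rpow_anti _ hea
            have : R / 2 ^ (k+1) ≤ dist z c := by
              by_contra hlt
              exact hz.2 (mem_ball.mpr (not_le.mp hlt))
            calc ENNReal.ofReal (R / 2 ^ (k+1)) ≤ ENNReal.ofReal (dist z c) :=
                  ENNReal.ofReal_le_ofReal this
            _ = edist z c := (edist_dist z c).symm
          calc ∫⁻ z in (ball c (R / 2 ^ k) \ ball c (R / 2 ^ (k + 1))),
              edist z c ^ (α - (n:ℝ)) ∂volume
              ≤ ∫⁻ _ in (ball c (R / 2 ^ k) \ ball c (R / 2 ^ (k + 1))),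
                ENNReal.ofReal (R / 2 ^ (k+1)) ^ (α - (n:ℝ)) ∂volume :=
              setLIntegral_mono' (measurableSet_ball.diff measurableSet_ball) hpt
          _ = ENNReal.ofReal (R / 2 ^ (k+1)) ^ (α - (n:ℝ)) *
                volume (ball c (R / 2 ^ k) \ ball c (R / 2 ^ (k + 1))) :=
              setLIntegral_const _ _
          _ ≤ _ := mul_le_mul_right (measure_mono Set.diff_subset) _
        refine step1.trans (le_of_eq ?_)
        rw [vol_ball c hrk', ENNReal.ofReal_rpow_of_pos hrk, ← mul_assoc,
          ← ENNReal.ofReal_mul (by positivity), ← Real.rpow_natCast (R / 2 ^ k) n,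
          term_eq (show (0:ℝ) < n by exact_mod_cast hn) hR k]
    _ = ENNReal.ofReal (2 ^ ((n:ℝ) - α)) * Vb n * (1 - ENNReal.ofReal (2 ^ (-α)))⁻¹ *
        ENNReal.ofReal (R ^ α) := by
        have hq : ∀ k : ℕ, ENNReal.ofReal (R ^ α * 2 ^ ((n:ℝ) - α) * (2 ^ (-α)) ^ k) * Vb n
            = (ENNReal.ofReal (R ^ α) * ENNReal.ofReal (2 ^ ((n:ℝ) - α)) * Vb n) *
              ENNReal.ofReal (2 ^ (-α)) ^ k := by
          intro k
          rw [ENNReal.ofReal_mul (by positivity), ENNReal.ofReal_mul (by positivity),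
            ENNReal.ofReal_pow (by positivity)]
          ring
        simp_rw [hq]
        rw [ENNReal.tsum_mul_left, ENNReal.tsum_geometric]
        ring

noncomputable def Kc (n : ℕ) (α : ℝ) : ℝ≥0∞ :=
  ENNReal.ofReal (2 ^ ((n:ℝ) - α)) * Vb n * (1 - ENNReal.ofReal (2 ^ (-α)))⁻¹

noncomputable def Dc (n : ℕ) (α : ℝ) : ℝ≥0∞ :=
  (Vb n)⁻¹ * Kc n α * ENNReal.ofReal (3 ^ α * 2 ^ ((n:ℝ) - α)) + 2 ^ n

lemma Dc_ne_top (n : ℕ) {α : ℝ} (hα0 : 0 < α) : Dc n α ≠ ⊤ := by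
  have h1 : ENNReal.ofReal (2 ^ (-α)) < 1 := by
    rw [ENNReal.ofReal_lt_one]
    exact Real.rpow_lt_one_of_one_lt_of_neg one_lt_two (neg_lt_zero.mpr hα0)
  have h2 : (1 - ENNReal.ofReal (2 ^ (-α)))⁻¹ ≠ ⊤ :=
    ENNReal.inv_ne_top.mpr (tsub_pos_of_lt h1).ne'
  have h3 : Kc n α ≠ ⊤ :=
    ENNReal.mul_ne_top (ENNReal.mul_ne_top ENNReal.ofReal_ne_top (Vb_ne_top n)) h2
  refine ENNReal.add_ne_top.mpr ⟨?_, ENNReal.pow_ne_top ENNReal.ofNat_ne_top⟩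
  exact ENNReal.mul_ne_top
    (ENNReal.mul_ne_top (ENNReal.inv_ne_top.mpr (Vb_pos n).ne') h3) ENNReal.ofReal_ne_top

lemma avg_eq {n : ℕ} (c : EuclideanSpace ℝ (Fin n)) {s : ℝ} (hs : 0 < s)
    (g : EuclideanSpace ℝ (Fin n) → ℝ≥0∞) :
    ⨍⁻ y in ball c s, g y ∂volume
      = (∫⁻ y in ball c s, g y ∂volume) * (ENNReal.ofReal (s ^ n))⁻¹ * (Vb n)⁻¹ := by
  rw [setLAverage_eq, vol_ball c hs, div_eq_mul_inv,
    ENNReal.mul_inv (Or.inl (ENNReal.ofReal_pos.mpr (pow_pos hs n)).ne')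
      (Or.inl ENNReal.ofReal_ne_top), mul_assoc]

lemma key {n : ℕ} (hn : 1 ≤ n) {α : ℝ} (hα0 : 0 < α) (hαn : α < n) {r : ℝ} (hr : 0 < r)
    (g : EuclideanSpace ℝ (Fin n) → ℝ≥0∞) (hg : Measurable g) (x : EuclideanSpace ℝ (Fin n)) :
    fracMaxLt 0 r (fracMaxLt α r g) x ≤ Dc n α * fracMaxLt α (2 * r) g x := by
  have hαn' : α - (n:ℝ) ≤ 0 := by
    have h : α < (n:ℝ) := hαn
    linarith
  set M := fracMaxLt α (2 * r) g x with hM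
  apply fracMaxLt_le
  intro ρ hρ0 hρr
  rw [Real.rpow_zero, ENNReal.ofReal_one, one_mul]
  set S := ball x (2 * ρ) with hS
  set B := ball x ρ with hB
  set H : EuclideanSpace ℝ (Fin n) → ℝ≥0∞ :=
    fun z => ∫⁻ y in S, g y * edist z y ^ (α - (n:ℝ)) ∂volume with hH
  have hkermeas : Measurable (fun p : (EuclideanSpace ℝ (Fin n)) × (EuclideanSpace ℝ (Fin n)) =>
      g p.2 * edist p.1 p.2 ^ (α - (n:ℝ))) :=
    (hg.comp measurable_snd).mul (measurable_edist.pow measurable_const)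
  have hHm : Measurable H := Measurable.lintegral_prod_right' hkermeas
  -- part B : large radii
  have claimB : ∀ z ∈ B, ∀ s : ℝ, ρ ≤ s → s < r →
      ENNReal.ofReal (s ^ α) * ⨍⁻ y in ball z s, g y ∂volume ≤ 2 ^ n * M := by
    intro z hz s hρs hsr
    have hs0 : 0 < s := lt_of_lt_of_le hρ0 hρs
    have hsρ0 : 0 < s + ρ := by linarith
    have hsub : ball z s ⊆ ball x (s + ρ) := by
      intro w hw
      have h1 : dist w z < s := mem_ball.mp hw
      have h2 : dist z x < ρ := mem_ball.mp hz
      exact mem_ball.mpr ((dist_triangle w z x).trans_lt (by linarith))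
    have hI : (∫⁻ y in ball z s, g y ∂volume) ≤ ∫⁻ y in ball x (s + ρ), g y ∂volume :=
      lintegral_mono_set hsub
    have hM1 : ENNReal.ofReal ((s + ρ) ^ α) *
        ((∫⁻ y in ball x (s + ρ), g y ∂volume) * (ENNReal.ofReal ((s + ρ) ^ n))⁻¹ * (Vb n)⁻¹)
          ≤ M := by
      have h := le_fracMaxLt α (2 * r) g x hsρ0 (by linarith)
      rwa [avg_eq x hsρ0 g] at h
    have coef : ENNReal.ofReal (s ^ α) * (ENNReal.ofReal (s ^ n))⁻¹
        ≤ 2 ^ n * (ENNReal.ofReal ((s + ρ) ^ α) * (ENNReal.ofReal ((s + ρ) ^ n))⁻¹) := by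
      have h := bridge (pow_pos hs0 n) (pow_pos hsρ0 n) (realB hα0.le n hs0 hρ0.le hρs)
      calc ENNReal.ofReal (s ^ α) * (ENNReal.ofReal (s ^ n))⁻¹
          ≤ ENNReal.ofReal (2 ^ n * (s + ρ) ^ α) * (ENNReal.ofReal ((s + ρ) ^ n))⁻¹ := h
      _ = 2 ^ n * (ENNReal.ofReal ((s + ρ) ^ α) * (ENNReal.ofReal ((s + ρ) ^ n))⁻¹) := by
          rw [ENNReal.ofReal_mul (by positivity), ENNReal.ofReal_pow (by norm_num),
            ENNReal.ofReal_ofNat, mul_assoc]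
    rw [avg_eq z hs0 g]
    calc ENNReal.ofReal (s ^ α) *
        ((∫⁻ y in ball z s, g y ∂volume) * (ENNReal.ofReal (s ^ n))⁻¹ * (Vb n)⁻¹)
        = (ENNReal.ofReal (s ^ α) * (ENNReal.ofReal (s ^ n))⁻¹) *
            (∫⁻ y in ball z s, g y ∂volume) * (Vb n)⁻¹ := by ring
      _ ≤ (2 ^ n * (ENNReal.ofReal ((s + ρ) ^ α) * (ENNReal.ofReal ((s + ρ) ^ n))⁻¹)) *
            (∫⁻ y in ball x (s + ρ), g y ∂volume) * (Vb n)⁻¹ :=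
          mul_le_mul' (mul_le_mul' coef hI) le_rfl
      _ = 2 ^ n * (ENNReal.ofReal ((s + ρ) ^ α) *
            ((∫⁻ y in ball x (s + ρ), g y ∂volume) *
              (ENNReal.ofReal ((s + ρ) ^ n))⁻¹ * (Vb n)⁻¹)) := by ring
      _ ≤ 2 ^ n * M := mul_le_mul_right hM1 _
  -- part A : small radii
  have claimA : ∀ z ∈ B, ∀ s : ℝ, 0 < s → s < ρ →
      ENNReal.ofReal (s ^ α) * ⨍⁻ y in ball z s, g y ∂volume ≤ (Vb n)⁻¹ * H z := by
    intro z hz s hs0 hsρ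
    have hsub : ball z s ⊆ S := by
      intro w hw
      have h1 : dist w z < s := mem_ball.mp hw
      have h2 : dist z x < ρ := mem_ball.mp hz
      exact mem_ball.mpr ((dist_triangle w z x).trans_lt (by linarith))
    have hpt : ∀ y ∈ ball z s, g y ≤
        ENNReal.ofReal s ^ ((n:ℝ) - α) * (g y * edist z y ^ (α - (n:ℝ))) := by
      intro y hy
      have hde : edist z y ≤ ENNReal.ofReal s := by
        rw [edist_comm, edist_dist]
        exact ENNReal.ofReal_le_ofReal (mem_ball.mp hy).le
      have h1 : ENNReal.ofReal s ^ (α - (n:ℝ)) ≤ edist z y ^ (α - (n:ℝ)) :=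
        rpow_anti hde hαn'
      have h2 : (1:ℝ≥0∞) ≤ ENNReal.ofReal s ^ ((n:ℝ) - α) * edist z y ^ (α - (n:ℝ)) := by
        have he : (1:ℝ≥0∞) = ENNReal.ofReal s ^ ((n:ℝ) - α) * ENNReal.ofReal s ^ (α - (n:ℝ)) := by
          rw [← ENNReal.rpow_add _ _ (ENNReal.ofReal_pos.mpr hs0).ne' ENNReal.ofReal_ne_top,
            show (n:ℝ) - α + (α - (n:ℝ)) = 0 by ring, ENNReal.rpow_zero]
        rw [he]
        exact mul_le_mul_right h1 _
      calc g y = 1 * g y := (one_mul _).symm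
      _ ≤ (ENNReal.ofReal s ^ ((n:ℝ) - α) * edist z y ^ (α - (n:ℝ))) * g y :=
          mul_le_mul_left h2 _
      _ = ENNReal.ofReal s ^ ((n:ℝ) - α) * (g y * edist z y ^ (α - (n:ℝ))) := by ring
    have hIle : (∫⁻ y in ball z s, g y ∂volume) ≤ ENNReal.ofReal s ^ ((n:ℝ) - α) * H z := by
      calc (∫⁻ y in ball z s, g y ∂volume)
          ≤ ∫⁻ y in ball z s,
              ENNReal.ofReal s ^ ((n:ℝ) - α) * (g y * edist z y ^ (α - (n:ℝ))) ∂volume :=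
            setLIntegral_mono' measurableSet_ball hpt
        _ = ENNReal.ofReal s ^ ((n:ℝ) - α) *
              ∫⁻ y in ball z s, g y * edist z y ^ (α - (n:ℝ)) ∂volume :=
            lintegral_const_mul _ (hg.mul (measurable_edist_right.pow measurable_const))
        _ ≤ ENNReal.ofReal s ^ ((n:ℝ) - α) * H z :=
            mul_le_mul_right (lintegral_mono_set hsub) _
    have coefOne : ENNReal.ofReal (s ^ α) * ENNReal.ofReal s ^ ((n:ℝ) - α) *
        (ENNReal.ofReal (s ^ n))⁻¹ = 1 := by
      rw [ENNReal.ofReal_rpow_of_pos hs0, ← ENNReal.ofReal_mul (by positivity),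
        ← ENNReal.ofReal_inv_of_pos (pow_pos hs0 n), ← ENNReal.ofReal_mul (by positivity),
        realInner n hs0, ENNReal.ofReal_one]
    rw [avg_eq z hs0 g]
    calc ENNReal.ofReal (s ^ α) *
        ((∫⁻ y in ball z s, g y ∂volume) * (ENNReal.ofReal (s ^ n))⁻¹ * (Vb n)⁻¹)
        ≤ ENNReal.ofReal (s ^ α) *
            ((ENNReal.ofReal s ^ ((n:ℝ) - α) * H z) * (ENNReal.ofReal (s ^ n))⁻¹ * (Vb n)⁻¹) :=
          mul_le_mul_right (mul_le_mul_left (mul_le_mul_left hIle _) _) _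
      _ = (ENNReal.ofReal (s ^ α) * ENNReal.ofReal s ^ ((n:ℝ) - α) *
            (ENNReal.ofReal (s ^ n))⁻¹) * ((Vb n)⁻¹ * H z) := by ring
      _ = (Vb n)⁻¹ * H z := by rw [coefOne, one_mul]
  -- combine the two parts
  have hcomb : ∀ z ∈ B, fracMaxLt α r g z ≤ (Vb n)⁻¹ * H z + 2 ^ n * M := by
    intro z hz
    apply fracMaxLt_le
    intro s hs0 hsr
    rcases lt_or_ge s ρ with h | h
    · exact (claimA z hz s hs0 h).trans le_self_add
    · exact (claimB z hz s h hsr).trans le_add_self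
  have hvol0 : volume B ≠ 0 := (measure_ball_pos _ _ hρ0).ne'
  have hvoltop : volume B ≠ ⊤ := measure_ball_lt_top.ne
  have havg : ⨍⁻ z in B, fracMaxLt α r g z ∂volume ≤
      ((Vb n)⁻¹ * ∫⁻ z in B, H z ∂volume) / volume B + 2 ^ n * M := by
    rw [setLAverage_eq]
    have h1 : (∫⁻ z in B, fracMaxLt α r g z ∂volume) ≤
        (Vb n)⁻¹ * (∫⁻ z in B, H z ∂volume) + (2 ^ n * M) * volume B := by
      calc (∫⁻ z in B, fracMaxLt α r g z ∂volume)
          ≤ ∫⁻ z in B, ((Vb n)⁻¹ * H z + 2 ^ n * M) ∂volume :=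
            setLIntegral_mono' measurableSet_ball hcomb
        _ = (Vb n)⁻¹ * (∫⁻ z in B, H z ∂volume) + (2 ^ n * M) * volume B := by
            rw [lintegral_add_right _ measurable_const, lintegral_const_mul _ hHm,
              setLIntegral_const]
    calc (∫⁻ z in B, fracMaxLt α r g z ∂volume) / volume B
        ≤ ((Vb n)⁻¹ * (∫⁻ z in B, H z ∂volume) + (2 ^ n * M) * volume B) / volume B :=
          ENNReal.div_le_div_right h1 _
      _ = ((Vb n)⁻¹ * ∫⁻ z in B, H z ∂volume) / volume B + 2 ^ n * M := by
          rw [ENNReal.add_div]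
          congr 1
          rw [mul_div_assoc, ENNReal.div_self hvol0 hvoltop, mul_one]
  have hswap : (∫⁻ z in B, H z ∂volume)
      = ∫⁻ y in S, g y * ∫⁻ z in B, edist z y ^ (α - (n:ℝ)) ∂volume ∂volume := by
    rw [lintegral_lintegral_swap hkermeas.aemeasurable]
    exact lintegral_congr fun y =>
      lintegral_const_mul _ (measurable_edist_left.pow measurable_const)
  have hinner : ∀ y ∈ S, (∫⁻ z in B, edist z y ^ (α - (n:ℝ)) ∂volume)
      ≤ Kc n α * ENNReal.ofReal ((3 * ρ) ^ α) := by
    intro y hy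
    have hsub : B ⊆ ball y (3 * ρ) := by
      intro w hw
      have h1 : dist w x < ρ := mem_ball.mp hw
      have h2 : dist y x < 2 * ρ := mem_ball.mp hy
      refine mem_ball.mpr ?_
      calc dist w y ≤ dist w x + dist x y := dist_triangle w x y
      _ < 3 * ρ := by rw [dist_comm x y]; linarith
    have h := (lintegral_mono_set hsub).trans (kernelBound hn hα0 hαn y (by linarith))
    unfold Kc
    exact h
  have hHbound : (∫⁻ z in B, H z ∂volume)
      ≤ Kc n α * ENNReal.ofReal ((3 * ρ) ^ α) * ∫⁻ y in S, g y ∂volume := by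
    rw [hswap]
    calc (∫⁻ y in S, g y * ∫⁻ z in B, edist z y ^ (α - (n:ℝ)) ∂volume ∂volume)
        ≤ ∫⁻ y in S, g y * (Kc n α * ENNReal.ofReal ((3 * ρ) ^ α)) ∂volume :=
          setLIntegral_mono' measurableSet_ball fun y hy => mul_le_mul_right (hinner y hy) _
      _ = Kc n α * ENNReal.ofReal ((3 * ρ) ^ α) * ∫⁻ y in S, g y ∂volume := by
          rw [lintegral_mul_const _ hg, mul_comm]
  have h2ρ : (0:ℝ) < 2 * ρ := by linarith
  have hM2 : ENNReal.ofReal ((2 * ρ) ^ α) *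
      ((∫⁻ y in S, g y ∂volume) * (ENNReal.ofReal ((2 * ρ) ^ n))⁻¹ * (Vb n)⁻¹) ≤ M := by
    have h := le_fracMaxLt α (2 * r) g x h2ρ (by linarith)
    rwa [avg_eq x h2ρ g] at h
  have coefA : ENNReal.ofReal ((3 * ρ) ^ α) * (ENNReal.ofReal (ρ ^ n))⁻¹
      ≤ ENNReal.ofReal (3 ^ α * 2 ^ ((n:ℝ) - α)) *
        (ENNReal.ofReal ((2 * ρ) ^ α) * (ENNReal.ofReal ((2 * ρ) ^ n))⁻¹) := by
    have hreal : (3 * ρ) ^ α * ((2 * ρ) ^ n)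
        ≤ 3 ^ α * 2 ^ ((n:ℝ) - α) * (2 * ρ) ^ α * (ρ ^ n) := (realA n hρ0).trans_eq (by ring)
    have h := bridge (pow_pos hρ0 n) (pow_pos h2ρ n) hreal
    calc ENNReal.ofReal ((3 * ρ) ^ α) * (ENNReal.ofReal (ρ ^ n))⁻¹
        ≤ ENNReal.ofReal (3 ^ α * 2 ^ ((n:ℝ) - α) * (2 * ρ) ^ α) *
            (ENNReal.ofReal ((2 * ρ) ^ n))⁻¹ := h
      _ = _ := by rw [ENNReal.ofReal_mul (by positivity), mul_assoc]
  refine havg.trans ?_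
  have hfirst : ((Vb n)⁻¹ * ∫⁻ z in B, H z ∂volume) / volume B
      ≤ ((Vb n)⁻¹ * Kc n α * ENNReal.ofReal (3 ^ α * 2 ^ ((n:ℝ) - α))) * M := by
    have hvolB : volume B = ENNReal.ofReal (ρ ^ n) * Vb n := vol_ball x hρ0
    calc ((Vb n)⁻¹ * ∫⁻ z in B, H z ∂volume) / volume B
        ≤ ((Vb n)⁻¹ * (Kc n α * ENNReal.ofReal ((3 * ρ) ^ α) * ∫⁻ y in S, g y ∂volume)) /
            volume B := ENNReal.div_le_div_right (mul_le_mul_right hHbound _) _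
      _ = (Vb n)⁻¹ * Kc n α * (ENNReal.ofReal ((3 * ρ) ^ α) * (ENNReal.ofReal (ρ ^ n))⁻¹) *
            (∫⁻ y in S, g y ∂volume) * (Vb n)⁻¹ := by
          rw [hvolB, div_eq_mul_inv,
            ENNReal.mul_inv (Or.inl (ENNReal.ofReal_pos.mpr (pow_pos hρ0 n)).ne')
              (Or.inl ENNReal.ofReal_ne_top)]
          ring
      _ ≤ (Vb n)⁻¹ * Kc n α * (ENNReal.ofReal (3 ^ α * 2 ^ ((n:ℝ) - α)) *
            (ENNReal.ofReal ((2 * ρ) ^ α) * (ENNReal.ofReal ((2 * ρ) ^ n))⁻¹)) *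
            (∫⁻ y in S, g y ∂volume) * (Vb n)⁻¹ :=
          mul_le_mul_left (mul_le_mul_left (mul_le_mul_right coefA _) _) _
      _ = ((Vb n)⁻¹ * Kc n α * ENNReal.ofReal (3 ^ α * 2 ^ ((n:ℝ) - α))) *
            (ENNReal.ofReal ((2 * ρ) ^ α) *
              ((∫⁻ y in S, g y ∂volume) * (ENNReal.ofReal ((2 * ρ) ^ n))⁻¹ * (Vb n)⁻¹)) := by
          ring
      _ ≤ _ := mul_le_mul_right hM2 _
  calc ((Vb n)⁻¹ * ∫⁻ z in B, H z ∂volume) / volume B + 2 ^ n * M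
      ≤ ((Vb n)⁻¹ * Kc n α * ENNReal.ofReal (3 ^ α * 2 ^ ((n:ℝ) - α))) * M + 2 ^ n * M :=
        add_le_add_left hfirst _
    _ = Dc n α * M := by unfold Dc; rw [add_mul]


/-- there exists `C = C(n, α)` such that for every `r > 0`,
`Mʳ(Mʳ_α f)(x) ≤ C M^{2r}_α f(x)`. -/
theorem stmt6 (n : ℕ) (hn : 1 ≤ n) (α : ℝ) (hα0 : 0 < α) (hαn : α < n) :
    ∃ C : ℝ, 0 < C ∧
      ∀ r : ℝ, 0 < r →
        ∀ f : EuclideanSpace ℝ (Fin n) → ℝ, LocallyIntegrable f volume →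
          ∀ x : EuclideanSpace ℝ (Fin n),
            fracMaxLt 0 r (fracMaxLt α r (fun y => ENNReal.ofReal |f y|)) x ≤
              ENNReal.ofReal C *
                fracMaxLt α (2 * r) (fun y => ENNReal.ofReal |f y|) x := by
  refine ⟨(Dc n α).toReal + 1, by positivity, ?_⟩
  intro r hr f hf x
  have hae : AEMeasurable (fun y => ENNReal.ofReal |f y|) volume :=
    ENNReal.measurable_ofReal.comp_aemeasurable
      (measurable_abs.comp_aemeasurable hf.aestronglyMeasurable.aemeasurable)
  set g : EuclideanSpace ℝ (Fin n) → ℝ≥0∞ := fun y => ENNReal.ofReal |f y| with hgdef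
  set g₀ := hae.mk g with hg0
  have hg₀m : Measurable g₀ := hae.measurable_mk
  have hcong : ∀ (β ρr : ℝ) (x' : EuclideanSpace ℝ (Fin n)),
      fracMaxLt β ρr g x' = fracMaxLt β ρr g₀ x' := by
    intro β ρr x'
    unfold fracMaxLt
    refine iSup_congr fun ρ => iSup_congr fun _ => iSup_congr fun _ => ?_
    congr 1
    rw [setLAverage_eq, setLAverage_eq]
    congr 1
    exact lintegral_congr_ae (ae_restrict_of_ae hae.ae_eq_mk)
  have hfun : fracMaxLt α r g = fracMaxLt α r g₀ := funext fun z => hcong α r z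
  calc fracMaxLt 0 r (fracMaxLt α r g) x
      = fracMaxLt 0 r (fracMaxLt α r g₀) x := by rw [hfun]
    _ ≤ Dc n α * fracMaxLt α (2 * r) g₀ x := key hn hα0 hαn hr g₀ hg₀m x
    _ = Dc n α * fracMaxLt α (2 * r) g x := by rw [hcong α (2 * r) x]
    _ ≤ ENNReal.ofReal ((Dc n α).toReal + 1) * fracMaxLt α (2 * r) g x := by
        apply mul_le_mul_left
        calc Dc n α = ENNReal.ofReal (Dc n α).toReal :=
              (ENNReal.ofReal_toReal (Dc_ne_top n hα0)).symm
        _ ≤ ENNReal.ofReal ((Dc n α).toReal + 1) := ENNReal.ofReal_le_ofReal (by linarith)
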